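/- Let p be prime and a, b, m, n ∈ {1,...,p-1} with a ≠ b. If m+n+1 = p, then the sum over k from 0 to p-1 of (a+k)^m (b+k)^n is congruent to -1 mod p; if m+n = p, the sum is congruent to m(b-a) mod p. -/

import Mathlib

open Finset

lemma zmod_power_sum (p : ℕ) [Fact p.Prime] (i : ℕ) (hi : i ≠ 0) :
    ∑ x : ZMod p, x ^ i = if (p - 1) ∣ i then -1 else 0 := by
  classical
  have h0 : ∑ x : ZMod p, x ^ i = ∑ x ∈ univ \ {(0 : ZMod p)}, x ^ i := by
    rw [← Finset.sum_sdiff ({(0 : ZMod p)} : Finset (ZMod p)).subset_univ,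
      Finset.sum_singleton, zero_pow hi, add_zero]
  let φ : (ZMod p)ˣ ↪ ZMod p := ⟨fun x => x, fun _ _ h => Units.ext h⟩
  have hmap : (univ : Finset (ZMod p)ˣ).map φ = univ \ {0} := by
    ext x
    simp only [mem_map, mem_univ, Function.Embedding.coeFn_mk, true_and, mem_sdiff,
      mem_singleton, φ]
    exact isUnit_iff_ne_zero
  have h1 : ∑ x ∈ univ \ {(0 : ZMod p)}, x ^ i = ∑ x : (ZMod p)ˣ, (x : ZMod p) ^ i := by
    rw [← hmap, Finset.sum_map]; rfl
  rw [h0, h1]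
  have := FiniteField.sum_pow_units (ZMod p) i
  rwa [ZMod.card] at this

lemma sum_range_cast (p : ℕ) [NeZero p] (g : ZMod p → ZMod p) :
    ∑ k ∈ Finset.range p, g (k : ZMod p) = ∑ x : ZMod p, g x := by
  refine Finset.sum_nbij' (fun k => (k : ZMod p)) (fun x => x.val) ?_ ?_ ?_ ?_ ?_
  · intro k _; exact mem_univ _
  · intro x _; exact mem_range.mpr (ZMod.val_lt x)
  · intro k hk; exact ZMod.val_cast_of_lt (mem_range.mp hk)
  · intro x _; exact ZMod.natCast_rightInverse x
  · intro k _; rfl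

theorem sum_product_special_cases (p a b m n : ℕ) (hp : p.Prime)
    (ha : 1 ≤ a ∧ a ≤ p - 1) (hb : 1 ≤ b ∧ b ≤ p - 1) (hab : a ≠ b)
    (hm : 1 ≤ m ∧ m ≤ p - 1) (hn : 1 ≤ n ∧ n ≤ p - 1) :
    (m + n + 1 = p →
      (∑ k ∈ Finset.range p,
          ((a : ZMod p) + (k : ZMod p)) ^ m * ((b : ZMod p) + (k : ZMod p)) ^ n) = -1) ∧
    (m + n = p →
      (∑ k ∈ Finset.range p,
          ((a : ZMod p) + (k : ZMod p)) ^ m * ((b : ZMod p) + (k : ZMod p)) ^ n) =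
        (m : ZMod p) * ((b : ZMod p) - (a : ZMod p))) := by
  haveI : Fact p.Prime := ⟨hp⟩
  haveI : NeZero p := ⟨hp.pos.ne'⟩
  have hp3 : 3 ≤ p := by
    rcases Nat.lt_or_ge p 3 with h | h
    · interval_cases p
      · exact absurd hp (by norm_num)
      · exact absurd hp (by norm_num)
      · omega
    · exact h
  set c : ZMod p := (b : ZMod p) - (a : ZMod p) with hc
  have hbc : (b : ZMod p) = (a : ZMod p) + c := by rw [hc]; ring
  have key : (∑ k ∈ Finset.range p,
        ((a : ZMod p) + (k : ZMod p)) ^ m * ((b : ZMod p) + (k : ZMod p)) ^ n)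
      = ∑ j ∈ Finset.range (n + 1),
          (n.choose j : ZMod p) * c ^ (n - j) * (if (p - 1) ∣ (m + j) then (-1 : ZMod p) else 0) := by
    calc
      (∑ k ∈ Finset.range p,
          ((a : ZMod p) + (k : ZMod p)) ^ m * ((b : ZMod p) + (k : ZMod p)) ^ n)
        = ∑ k ∈ Finset.range p,
            ((a : ZMod p) + (k : ZMod p)) ^ m * (((a : ZMod p) + (k : ZMod p)) + c) ^ n := by
          apply Finset.sum_congr rfl; intro k _; rw [hbc]; ring_nf
      _ = ∑ x : ZMod p, ((a : ZMod p) + x) ^ m * (((a : ZMod p) + x) + c) ^ n :=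
          sum_range_cast p (fun x => ((a : ZMod p) + x) ^ m * (((a : ZMod p) + x) + c) ^ n)
      _ = ∑ y : ZMod p, y ^ m * (y + c) ^ n := by
          exact Fintype.sum_equiv (Equiv.addLeft (a : ZMod p))
            (fun x => ((a : ZMod p) + x) ^ m * (((a : ZMod p) + x) + c) ^ n)
            (fun y => y ^ m * (y + c) ^ n) (fun x => rfl)
      _ = ∑ y : ZMod p, ∑ j ∈ Finset.range (n + 1),
            (n.choose j : ZMod p) * c ^ (n - j) * y ^ (m + j) := by
          apply Finset.sum_congr rfl; intro y _
          rw [add_pow, Finset.mul_sum]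
          apply Finset.sum_congr rfl; intro j _
          rw [pow_add]; ring
      _ = ∑ j ∈ Finset.range (n + 1), ∑ y : ZMod p,
            (n.choose j : ZMod p) * c ^ (n - j) * y ^ (m + j) := Finset.sum_comm
      _ = _ := by
          apply Finset.sum_congr rfl; intro j _
          rw [← Finset.mul_sum, zmod_power_sum p (m + j) (by omega)]
  constructor
  · intro h1
    rw [key, Finset.sum_eq_single n]
    · have hd : (p-1) ∣ (m+n) := ⟨1, by omega⟩
      rw [if_pos hd]
      simp
    · intro j hj hjn
      rw [if_neg, mul_zero]
      intro hd
      have h0 : 0 < m + j := by omega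
      have hle := Nat.le_of_dvd h0 hd
      have hjlt : j < n + 1 := Finset.mem_range.mp hj
      omega
    · intro h; exact absurd (Finset.self_mem_range_succ n) h
  · intro h2
    have hmn0 : (m : ZMod p) + (n : ZMod p) = 0 := by
      have : ((m + n : ℕ) : ZMod p) = 0 := by rw [h2]; exact ZMod.natCast_self p
      push_cast at this; exact this
    rw [key, Finset.sum_eq_single (n - 1)]
    · have hd : (p-1) ∣ (m + (n-1)) := ⟨1, by omega⟩
      rw [if_pos hd]
      have hch : n.choose (n - 1) = n := by
        rw [Nat.choose_symm (by omega : 1 ≤ n), Nat.choose_one_right]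
      have hnn : n - (n - 1) = 1 := by omega
      rw [hch, hnn, pow_one]
      have : (n : ZMod p) = -(m : ZMod p) := by linear_combination hmn0
      rw [this]; ring
    · intro j hj hjn
      rw [if_neg, mul_zero]
      intro hd
      have h0 : 0 < m + j := by omega
      have hle := Nat.le_of_dvd h0 hd
      have hjlt : j < n + 1 := Finset.mem_range.mp hj
      obtain ⟨t, ht⟩ := hd
      have ht2 : 2 ≤ t → (p - 1) * 2 ≤ (p - 1) * t := fun h => Nat.mul_le_mul_left _ h
      rcases Nat.lt_or_ge t 2 with h | h
      · interval_cases t <;> omega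
      · have := ht2 h; omega
    · intro h; exact absurd (Finset.mem_range.mpr (by omega)) h
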